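/- Let X be a compact Hausdorff space with its Borel σ-algebra and let a group G act on X by homeomorphisms, acting on Prob(X) by pushforward. Assume that for every μ ∈ Prob(X) there exists x ∈ X such that δ_x lies in the closure of {g·μ : g ∈ G} in Prob(X). Then for all μ₁, μ₂ ∈ Prob(X) there exists x ∈ X such that the pair (δ_x, δ_x) lies in the closure of {(g·μ₁, g·μ₂) : g ∈ G} in Prob(X) × Prob(X); in particular the induced action of G on Prob(X) is proximal. -/

import Mathlib

open Filter Topology MeasureTheory
open scoped ENNReal

lemma dirac_prob_aux {X : Type*} [TopologicalSpace X] [MeasurableSpace X] [OpensMeasurableSpace X]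
    {ι : Type*} {F : Filter ι} (x : X) (μs νs : ι → ProbabilityMeasure X)
    (hle : ∀ i, (νs i : Measure X) ≤ (2 : ℝ≥0∞) • (μs i : Measure X))
    (hμ : Tendsto μs F (𝓝 (⟨Measure.dirac x, inferInstance⟩ : ProbabilityMeasure X))) :
    Tendsto νs F (𝓝 (⟨Measure.dirac x, inferInstance⟩ : ProbabilityMeasure X)) := by
  replace hμ := ProbabilityMeasure.tendsto_iff_forall_integral_tendsto.1 hμ
  refine ProbabilityMeasure.tendsto_iff_forall_integral_tendsto.2 ?_
  intro f
  simp only [ProbabilityMeasure.coe_mk] at hμ ⊢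
  set g : BoundedContinuousFunction X ℝ := |f - BoundedContinuousFunction.const X (f x)| with hg
  have hgx : g x = 0 := by simp [hg]
  have hgnn : ∀ y, 0 ≤ g y := fun y => by simp [hg]
  have hμg := hμ g
  rw [integral_dirac' _ x g.continuous.stronglyMeasurable, hgx] at hμg
  rw [integral_dirac' _ x f.continuous.stronglyMeasurable]
  have key : ∀ i, ‖(∫ ω, f ω ∂(νs i)) - f x‖ ≤ 2 * ∫ ω, g ω ∂(μs i) := by
    intro i
    have hint : Integrable f (νs i : Measure X) := f.integrable _
    have h1 : (∫ ω, f ω ∂(νs i)) - f x = ∫ ω, (f ω - f x) ∂(νs i) := by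
      rw [integral_sub hint (integrable_const _)]
      simp
    rw [h1]
    calc ‖∫ ω, (f ω - f x) ∂(νs i)‖ ≤ ∫ ω, ‖f ω - f x‖ ∂(νs i) :=
          norm_integral_le_integral_norm _
      _ = ∫ ω, g ω ∂(νs i) := by
          refine integral_congr_ae (Eventually.of_forall fun y => ?_)
          simp [hg, Real.norm_eq_abs]
      _ ≤ ∫ ω, g ω ∂((2 : ℝ≥0∞) • (μs i : Measure X)) := by
          refine integral_mono_measure (hle i) (Eventually.of_forall hgnn) ?_
          exact (g.integrable (μs i)).smul_measure (c := (2 : ℝ≥0∞)) (by norm_num)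
      _ = 2 * ∫ ω, g ω ∂(μs i) := by
          rw [integral_smul_measure]
          simp [ENNReal.toReal_ofNat]
  have h2 : Tendsto (fun i => 2 * ∫ ω, g ω ∂(μs i)) F (𝓝 0) := by
    simpa using hμg.const_mul 2
  have h3 := (squeeze_zero_norm key h2).add
    (tendsto_const_nhds : Tendsto (fun _ : ι => f x) F (𝓝 (f x)))
  simpa using h3

theorem prob_action_proximal {X : Type*} [TopologicalSpace X] [CompactSpace X] [T2Space X]
    [MeasurableSpace X] [BorelSpace X]
    {G : Type*} [Group G] [MulAction G X]
    (hcont : ∀ g : G, Continuous fun x : X => g • x)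
    (hsp : ∀ μ : ProbabilityMeasure X, ∃ x : X,
      (⟨Measure.dirac x, inferInstance⟩ : ProbabilityMeasure X) ∈
        closure {ν : ProbabilityMeasure X |
          ∃ g : G, ν = μ.map (hcont g).measurable.aemeasurable}) :
    ∀ μ₁ μ₂ : ProbabilityMeasure X, ∃ x : X,
      ((⟨Measure.dirac x, inferInstance⟩ : ProbabilityMeasure X),
        (⟨Measure.dirac x, inferInstance⟩ : ProbabilityMeasure X)) ∈
        closure {p : ProbabilityMeasure X × ProbabilityMeasure X |
          ∃ g : G, p = (μ₁.map (hcont g).measurable.aemeasurable,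
            μ₂.map (hcont g).measurable.aemeasurable)} := by
  intro μ₁ μ₂
  have hP : IsProbabilityMeasure
      ((2 : ℝ≥0∞)⁻¹ • (μ₁ : Measure X) + (2 : ℝ≥0∞)⁻¹ • (μ₂ : Measure X)) := by
    constructor
    simp [ENNReal.inv_two_add_inv_two]
  set μ : ProbabilityMeasure X :=
    ⟨(2 : ℝ≥0∞)⁻¹ • (μ₁ : Measure X) + (2 : ℝ≥0∞)⁻¹ • (μ₂ : Measure X), hP⟩ with hμdef
  obtain ⟨x, hx⟩ := hsp μ
  refine ⟨x, ?_⟩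
  set d : ProbabilityMeasure X := (⟨Measure.dirac x, inferInstance⟩ : ProbabilityMeasure X)
    with hd
  set T : G → ProbabilityMeasure X := fun g => μ.map (hcont g).measurable.aemeasurable with hT
  have hxr : d ∈ closure (Set.range T) := by
    have hset : Set.range T = {ν : ProbabilityMeasure X |
        ∃ g : G, ν = μ.map (hcont g).measurable.aemeasurable} := by
      ext ν
      simp [hT, Set.range, eq_comm]
    rw [hset]
    exact hx
  have hcp : ClusterPt d (𝓟 (Set.range T)) := mem_closure_iff_clusterPt.mp hxr
  haveI hne : (𝓝 d ⊓ 𝓟 (Set.range T)).NeBot := hcp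
  set U : Ultrafilter (ProbabilityMeasure X) :=
    @Ultrafilter.of _ (𝓝 d ⊓ 𝓟 (Set.range T)) hne with hU
  have hofle : (U : Filter (ProbabilityMeasure X)) ≤ 𝓝 d ⊓ 𝓟 (Set.range T) :=
    @Ultrafilter.of_le _ _ hne
  have hUle : (U : Filter (ProbabilityMeasure X)) ≤ 𝓝 d := hofle.trans inf_le_left
  have hUr : Set.range T ∈ U := hofle (mem_inf_of_right (mem_principal_self _))
  haveI hcomap : (Filter.comap T (U : Filter (ProbabilityMeasure X))).NeBot := by
    rw [Filter.comap_neBot_iff]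
    intro s hs
    obtain ⟨ν, hν⟩ := Ultrafilter.nonempty_of_mem (inter_mem hs hUr)
    obtain ⟨g, hg⟩ := hν.2
    rw [← hg] at hν
    exact ⟨g, hν.1⟩
  set V : Ultrafilter G := @Ultrafilter.of _ (Filter.comap T U) hcomap with hV
  have hTend : Tendsto T (V : Filter G) (𝓝 d) := by
    calc Filter.map T (V : Filter G)
        ≤ Filter.map T (Filter.comap T U) := Filter.map_mono (@Ultrafilter.of_le _ _ hcomap)
      _ = (U : Filter (ProbabilityMeasure X)) ⊓ 𝓟 (Set.range T) := Filter.map_comap _ _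
      _ ≤ 𝓝 d := inf_le_left.trans hUle
  have hdom : ∀ (κ : ProbabilityMeasure X), (κ : Measure X) ≤ (2 : ℝ≥0∞) • (μ : Measure X) →
      ∀ g : G, ((κ.map (hcont g).measurable.aemeasurable : ProbabilityMeasure X) : Measure X)
        ≤ (2 : ℝ≥0∞) • ((T g : ProbabilityMeasure X) : Measure X) := by
    intro κ hκ g
    rw [hT]
    rw [ProbabilityMeasure.toMeasure_map, ProbabilityMeasure.toMeasure_map]
    calc (κ : Measure X).map (fun x => g • x)
        ≤ ((2 : ℝ≥0∞) • (μ : Measure X)).map (fun x => g • x) :=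
          Measure.map_mono hκ (hcont g).measurable
      _ = (2 : ℝ≥0∞) • ((μ : Measure X).map (fun x => g • x)) := Measure.map_smul _ _ _
  have hμ₁le : (μ₁ : Measure X) ≤ (2 : ℝ≥0∞) • (μ : Measure X) := by
    rw [hμdef]
    show (μ₁ : Measure X) ≤ (2 : ℝ≥0∞) • ((2 : ℝ≥0∞)⁻¹ • (μ₁ : Measure X)
      + (2 : ℝ≥0∞)⁻¹ • (μ₂ : Measure X))
    rw [smul_add, smul_smul, smul_smul, ENNReal.mul_inv_cancel (by norm_num) (by norm_num),
      one_smul, one_smul]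
    exact Measure.le_add_right le_rfl
  have hμ₂le : (μ₂ : Measure X) ≤ (2 : ℝ≥0∞) • (μ : Measure X) := by
    rw [hμdef]
    show (μ₂ : Measure X) ≤ (2 : ℝ≥0∞) • ((2 : ℝ≥0∞)⁻¹ • (μ₁ : Measure X)
      + (2 : ℝ≥0∞)⁻¹ • (μ₂ : Measure X))
    rw [smul_add, smul_smul, smul_smul, ENNReal.mul_inv_cancel (by norm_num) (by norm_num),
      one_smul, one_smul]
    exact Measure.le_add_left le_rfl
  have h1 : Tendsto (fun g : G => μ₁.map (hcont g).measurable.aemeasurable) (V : Filter G)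
      (𝓝 d) := dirac_prob_aux x T _ (fun g => hdom μ₁ hμ₁le g) hTend
  have h2 : Tendsto (fun g : G => μ₂.map (hcont g).measurable.aemeasurable) (V : Filter G)
      (𝓝 d) := dirac_prob_aux x T _ (fun g => hdom μ₂ hμ₂le g) hTend
  have hmem : {p : ProbabilityMeasure X × ProbabilityMeasure X |
      ∃ g : G, p = (μ₁.map (hcont g).measurable.aemeasurable,
        μ₂.map (hcont g).measurable.aemeasurable)} ∈
      Filter.map (fun g : G => (μ₁.map (hcont g).measurable.aemeasurable,
        μ₂.map (hcont g).measurable.aemeasurable)) (V : Filter G) :=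
    mem_map.mpr (Eventually.of_forall fun g => ⟨g, rfl⟩)
  have hpt : ClusterPt (d, d) (𝓟 {p : ProbabilityMeasure X × ProbabilityMeasure X |
      ∃ g : G, p = (μ₁.map (hcont g).measurable.aemeasurable,
        μ₂.map (hcont g).measurable.aemeasurable)}) :=
    Filter.neBot_of_le (le_inf (h1.prodMk_nhds h2) (le_principal_iff.mpr hmem))
  have goal' := mem_closure_iff_clusterPt.mpr hpt
  exact goal'
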